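/- For every real k₁ ∈ (0,2) and every real k₂ ≥ 0 there exists a constant C > 0 such that for all r > 2: (ln r)·∫₂^r τ^{1−k₁}(ln τ)^{k₂} dτ − ∫₂^r τ^{1−k₁}(ln τ)^{k₂+1} dτ ≤ C r^{2−k₁}(ln r)^{k₂}. -/

import Mathlib

open Real

theorem log_integral_cancellation
    (k₁ k₂ : ℝ) (hk₁ : k₁ ∈ Set.Ioo (0 : ℝ) 2) (hk₂ : 0 ≤ k₂) :
    ∃ C > (0 : ℝ), ∀ r : ℝ, 2 < r →
      Real.log r * (∫ τ in (2 : ℝ)..r, τ ^ (1 - k₁) * Real.log τ ^ k₂) -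
        (∫ τ in (2 : ℝ)..r, τ ^ (1 - k₁) * Real.log τ ^ (k₂ + 1)) ≤
          C * r ^ (2 - k₁) * Real.log r ^ k₂ := by
  obtain ⟨hk₁0, hk₁2⟩ := hk₁
  set a : ℝ := (2 - k₁) / 2 with ha_def
  have ha : 0 < a := by simp only [ha_def]; linarith
  refine ⟨1 / a ^ 2, by positivity, ?_⟩
  intro r hr
  have hr0 : (0:ℝ) < r := by linarith
  have h2r : (2:ℝ) ≤ r := le_of_lt hr
  have huIcc : Set.uIcc (2:ℝ) r = Set.Icc 2 r := Set.uIcc_of_le h2r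
  have hlogr : 0 < Real.log r := Real.log_pos (by linarith)
  have hmem : ∀ τ ∈ Set.Icc (2:ℝ) r, (0:ℝ) < τ ∧ 0 < Real.log τ ∧ Real.log τ ≤ Real.log r := by
    intro τ hτ
    obtain ⟨h1, h2⟩ := hτ
    exact ⟨by linarith, Real.log_pos (by linarith), Real.log_le_log (by linarith) h2⟩
  have hcont : ∀ p q : ℝ, ContinuousOn (fun τ : ℝ => τ ^ p * Real.log τ ^ q) (Set.Icc 2 r) := by
    intro p q
    apply ContinuousOn.mul
    · exact ContinuousOn.rpow_const continuousOn_id fun x hx =>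
        Or.inl (ne_of_gt (hmem x hx).1)
    · exact ContinuousOn.rpow_const
        (Real.continuousOn_log.mono fun x hx => ne_of_gt (hmem x hx).1)
        fun x hx => Or.inl (ne_of_gt (hmem x hx).2.1)
  have hInt : ∀ p q : ℝ, IntervalIntegrable (fun τ : ℝ => τ ^ p * Real.log τ ^ q)
      MeasureTheory.volume 2 r := by
    intro p q
    exact (hcont p q).intervalIntegrable_of_Icc h2r
  -- rewrite LHS as a single integral
  have hLHS : Real.log r * (∫ τ in (2 : ℝ)..r, τ ^ (1 - k₁) * Real.log τ ^ k₂) -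
        (∫ τ in (2 : ℝ)..r, τ ^ (1 - k₁) * Real.log τ ^ (k₂ + 1)) =
      ∫ τ in (2:ℝ)..r, τ ^ (1 - k₁) * Real.log τ ^ k₂ * (Real.log r - Real.log τ) := by
    rw [← intervalIntegral.integral_const_mul,
      ← intervalIntegral.integral_sub ((hInt (1-k₁) k₂).const_mul _) (hInt (1-k₁) (k₂+1))]
    apply intervalIntegral.integral_congr
    intro τ hτ
    rw [huIcc] at hτ
    obtain ⟨hτ0, hlogτ, _⟩ := hmem τ hτ
    simp only
    rw [Real.rpow_add_one (ne_of_gt hlogτ)]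
    ring
  rw [hLHS]
  have hexp : (1 - k₁) - a = -(k₁/2) := by rw [ha_def]; ring
  -- pointwise bound
  have hpt : ∀ τ ∈ Set.Icc (2:ℝ) r,
      τ ^ (1 - k₁) * Real.log τ ^ k₂ * (Real.log r - Real.log τ) ≤
        (Real.log r ^ k₂ * (r ^ a / a)) * τ ^ (-(k₁/2)) := by
    intro τ hτ
    obtain ⟨hτ0, hlogτ, hloglr⟩ := hmem τ hτ
    have hτr : τ ≤ r := hτ.2
    have hdiv1 : (1:ℝ) ≤ r / τ := (one_le_div hτ0).2 hτr
    have hlog_le : Real.log r - Real.log τ ≤ (r/τ) ^ a / a := by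
      rw [← Real.log_div (ne_of_gt hr0) (ne_of_gt hτ0)]
      have h1 := Real.log_le_sub_one_of_pos (Real.rpow_pos_of_pos (by linarith : (0:ℝ) < r/τ) a)
      rw [Real.log_rpow (by linarith : (0:ℝ) < r/τ)] at h1
      rw [le_div_iff₀ ha]
      nlinarith [mul_comm a (Real.log (r/τ))]
    have hlogpow : Real.log τ ^ k₂ ≤ Real.log r ^ k₂ :=
      Real.rpow_le_rpow (le_of_lt hlogτ) hloglr hk₂
    have hsub0 : 0 ≤ Real.log r - Real.log τ := by linarith
    have step1 : τ ^ (1 - k₁) * Real.log τ ^ k₂ * (Real.log r - Real.log τ) ≤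
        τ ^ (1 - k₁) * Real.log r ^ k₂ * ((r/τ) ^ a / a) := by
      apply mul_le_mul
      · exact mul_le_mul_of_nonneg_left hlogpow (Real.rpow_nonneg (le_of_lt hτ0) _)
      · exact hlog_le
      · exact hsub0
      · positivity
    refine step1.trans (le_of_eq ?_)
    rw [Real.div_rpow (le_of_lt hr0) (le_of_lt hτ0)]
    have heq : τ ^ (1 - k₁) * Real.log r ^ k₂ * ((r ^ a / τ ^ a) / a) =
        (Real.log r ^ k₂ * (r ^ a / a)) * (τ ^ (1 - k₁) / τ ^ a) := by ring
    rw [heq, ← Real.rpow_sub hτ0, hexp]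
  -- integrability of both sides of the pointwise bound
  have hIntL : IntervalIntegrable
      (fun τ : ℝ => τ ^ (1 - k₁) * Real.log τ ^ k₂ * (Real.log r - Real.log τ))
      MeasureTheory.volume 2 r := by
    apply ContinuousOn.intervalIntegrable_of_Icc h2r
    exact (hcont (1 - k₁) k₂).mul (continuousOn_const.sub
      (Real.continuousOn_log.mono fun x hx => ne_of_gt (hmem x hx).1))
  have hIntR : IntervalIntegrable
      (fun τ : ℝ => (Real.log r ^ k₂ * (r ^ a / a)) * τ ^ (-(k₁/2)))
      MeasureTheory.volume 2 r :=
    (intervalIntegral.intervalIntegrable_rpow' (by linarith)).const_mul _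
  have hmono := intervalIntegral.integral_mono_on h2r hIntL hIntR hpt
  refine hmono.trans ?_
  rw [intervalIntegral.integral_const_mul,
    integral_rpow (Or.inl (by linarith : (-1:ℝ) < -(k₁/2)))]
  have hexp2 : -(k₁/2) + 1 = a := by rw [ha_def]; ring
  rw [hexp2]
  have h2a : (0:ℝ) ≤ (2:ℝ) ^ a := Real.rpow_nonneg (by norm_num) a
  have hbound : (r ^ a - 2 ^ a) / a ≤ r ^ a / a :=
    (div_le_div_iff_of_pos_right ha).2 (by linarith)
  have key : Real.log r ^ k₂ * (r ^ a / a) * ((r ^ a - 2 ^ a) / a) ≤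
      Real.log r ^ k₂ * (r ^ a / a) * (r ^ a / a) :=
    mul_le_mul_of_nonneg_left hbound (by positivity)
  refine key.trans (le_of_eq ?_)
  have hra : r ^ a * r ^ a = r ^ (2 - k₁) := by
    rw [← Real.rpow_add hr0]; congr 1; rw [ha_def]; ring
  calc Real.log r ^ k₂ * (r ^ a / a) * (r ^ a / a)
      = 1 / a ^ 2 * (r ^ a * r ^ a) * Real.log r ^ k₂ := by field_simp
    _ = 1 / a ^ 2 * r ^ (2 - k₁) * Real.log r ^ k₂ := by rw [hra]
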